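/- Let n, k, q, r be positive integers with k even, k ≥ 4, 2n = k·q + r, 0 ≤ r < k, q ≥ 2. Define the cyclic sequence of length k: one copy of q−1, then r/2 copies of q+1, then (k−r−2)/2 copies of q, then (r+2)/2 copies of q+1, then (k−r−2)/2 copies of q (here r is even since 2n − kq with k even; assume r even). Then the entries sum to 2n and no block of cyclically consecutive entries sums to exactly n. -/

import Mathlib

private lemma rot_sum (f : ℕ → ℕ) (k : ℕ) : ∀ s : ℕ,
    ∑ t ∈ Finset.range k, f ((s + t) % k) = ∑ t ∈ Finset.range k, f (t % k) := by
  intro s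
  induction s with
  | zero => simp
  | succ s ih =>
    rw [← ih]
    rcases Nat.eq_zero_or_pos k with hk | hk
    · simp [hk]
    obtain ⟨m, rfl⟩ : ∃ m, k = m + 1 := ⟨k - 1, by omega⟩
    rw [Finset.sum_range_succ (fun t => f ((s + 1 + t) % (m + 1))),
      Finset.sum_range_succ' (fun t => f ((s + t) % (m + 1)))]
    have h1 : s + 1 + m = s + (m + 1) := by omega
    have h2 : (s + (m + 1)) % (m + 1) = s % (m + 1) := Nat.add_mod_right s (m + 1)
    have h3 : (s + 0) % (m + 1) = s % (m + 1) := by rw [Nat.add_zero]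
    rw [h1, h2, h3]
    congr 1
    apply Finset.sum_congr rfl
    intro t _
    congr 2
    omega

private lemma count_le (h ρ s len : ℕ) (hlen : len ≤ h) :
    (∑ t ∈ Finset.range len, if (s + t) % h ≤ ρ then 1 else 0) ≤ ρ + 1 := by
  rw [← Finset.card_filter]
  have := Finset.card_le_card_of_injOn (s := (Finset.range len).filter
      (fun t => (s + t) % h ≤ ρ)) (t := Finset.range (ρ + 1)) (fun t => (s + t) % h)
    (by
      intro t ht
      rw [Finset.mem_coe, Finset.mem_filter] at ht
      show (s + t) % h ∈ Finset.range (ρ + 1)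
      rw [Finset.mem_range]
      omega)
    (by
      intro t1 h1 t2 h2 heq
      simp only [Finset.coe_filter, Set.mem_setOf_eq, Finset.mem_range] at h1 h2
      have h3 : t1 ≡ t2 [MOD h] :=
        Nat.ModEq.add_left_cancel' s (heq : (s + t1) % h = (s + t2) % h)
      have e1 : t1 % h = t1 := Nat.mod_eq_of_lt (by omega)
      have e2 : t2 % h = t2 := Nat.mod_eq_of_lt (by omega)
      unfold Nat.ModEq at h3
      omega)
  simpa using this

private lemma count_eq (h ρ s : ℕ) (hρ : ρ < h) :
    (∑ t ∈ Finset.range h, if (s + t) % h ≤ ρ then 1 else 0) = ρ + 1 := by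
  refine le_antisymm (count_le h ρ s h le_rfl) ?_
  rw [← Finset.card_filter]
  have hh : 0 < h := by omega
  have := Finset.card_le_card_of_surjOn (s := (Finset.range h).filter
      (fun t => (s + t) % h ≤ ρ)) (t := Finset.range (ρ + 1)) (fun t => (s + t) % h)
    (by
      intro v hv
      simp only [Finset.coe_sort_coe, Finset.mem_coe, Finset.mem_range] at hv
      have hσ : s % h < h := Nat.mod_lt _ hh
      set σ := s % h with hσdef
      refine ⟨if σ ≤ v then v - σ else h + v - σ, ?_, ?_⟩
      · simp only [Finset.coe_filter, Set.mem_setOf_eq, Finset.mem_range]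
        have htlt : (if σ ≤ v then v - σ else h + v - σ) < h := by
          split <;> omega
        have hmod : (s + if σ ≤ v then v - σ else h + v - σ) % h = v := by
          rw [Nat.add_mod, Nat.mod_eq_of_lt htlt, ← hσdef]
          split
          · have : σ + (v - σ) = v := by omega
            rw [this, Nat.mod_eq_of_lt (by omega)]
          · have : σ + (h + v - σ) = h + v := by omega
            rw [this, Nat.add_mod_left, Nat.mod_eq_of_lt (by omega)]
        constructor
        · exact htlt
        · rw [hmod]; omega
      · simp only [Finset.mem_coe, Finset.mem_range]
        have htlt : (if σ ≤ v then v - σ else h + v - σ) < h := by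
          split <;> omega
        rw [Nat.add_mod, Nat.mod_eq_of_lt htlt, ← hσdef]
        split
        · have : σ + (v - σ) = v := by omega
          rw [this, Nat.mod_eq_of_lt (by omega)]
        · have : σ + (h + v - σ) = h + v := by omega
          rw [this, Nat.add_mod_left, Nat.mod_eq_of_lt (by omega)])
  simpa using this

private lemma zcount_le (k s len : ℕ) (hlen : len ≤ k) :
    (∑ t ∈ Finset.range len, if (s + t) % k = 0 then 1 else 0) ≤ 1 := by
  rw [← Finset.card_filter]
  rw [Finset.card_le_one]
  intro t1 h1 t2 h2
  rw [Finset.mem_filter, Finset.mem_range] at h1 h2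
  have h3 : t1 ≡ t2 [MOD k] :=
    Nat.ModEq.add_left_cancel' s (show (s + t1) % k = (s + t2) % k by omega)
  have e1 : t1 % k = t1 := Nat.mod_eq_of_lt (by omega)
  have e2 : t2 % k = t2 := Nat.mod_eq_of_lt (by omega)
  unfold Nat.ModEq at h3
  omega

theorem stmt_14 (n k q r : ℕ) (hn : 0 < n) (hr0 : 0 < r)
    (hke : Even k) (hk4 : 4 ≤ k) (h2n : 2 * n = k * q + r) (hr : r < k)
    (hq : 2 ≤ q) (hre : Even r)
    (a : ℕ → ℕ)
    (ha : ∀ i, a i =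
      if i = 0 then q - 1
      else if i < 1 + r / 2 then q + 1
      else if i < 1 + r / 2 + (k - r - 2) / 2 then q
      else if i < 1 + r / 2 + (k - r - 2) / 2 + (r + 2) / 2 then q + 1
      else q) :
    (∑ i ∈ Finset.range k, a i) = 2 * n ∧
      ∀ s len, 0 < len → len < k →
        (∑ t ∈ Finset.range len, a ((s + t) % k)) ≠ n := by
  obtain ⟨h, hkh⟩ := hke
  obtain ⟨ρ, hrρ⟩ := hre
  have hh2 : 2 ≤ h := by omega
  have hρ1 : 1 ≤ ρ := by omega
  have hρh : ρ < h := by omega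
  have hk0 : 0 < k := by omega
  have hkq : k * q = 2 * (h * q) := by rw [hkh]; ring
  have hn' : n = h * q + ρ := by omega
  -- value lemma
  have haval : ∀ j, j < k → a j + 2 * (if j = 0 then 1 else 0)
      = q + (if j % h ≤ ρ then 1 else 0) := by
    intro j hj
    have hjh : j % h = if j < h then j else j - h := by
      split
      · exact Nat.mod_eq_of_lt ‹_›
      · rw [Nat.mod_eq_sub_mod (by omega)]
        exact Nat.mod_eq_of_lt (by omega)
    rw [ha j, hjh]
    split_ifs <;> omega
  -- key identity
  have key : ∀ s len, (∑ t ∈ Finset.range len, a ((s + t) % k))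
      + 2 * (∑ t ∈ Finset.range len, if (s + t) % k = 0 then 1 else 0)
      = len * q + (∑ t ∈ Finset.range len, if (s + t) % h ≤ ρ then 1 else 0) := by
    intro s len
    have hpt : ∀ t, a ((s + t) % k) + 2 * (if (s + t) % k = 0 then 1 else 0)
        = q + (if (s + t) % h ≤ ρ then 1 else 0) := by
      intro t
      have hjk : (s + t) % k < k := Nat.mod_lt _ hk0
      have hdvd : (s + t) % k % h = (s + t) % h :=
        Nat.mod_mod_of_dvd _ ⟨2, by omega⟩
      rw [← hdvd]
      exact haval _ hjk
    rw [Finset.mul_sum, ← Finset.sum_add_distrib,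
      Finset.sum_congr rfl (fun t _ => hpt t), Finset.sum_add_distrib,
      Finset.sum_const, Finset.card_range, smul_eq_mul]
  -- total sum
  have htot : (∑ i ∈ Finset.range k, a i) = 2 * n := by
    have hZ : (∑ t ∈ Finset.range k, if (0 + t) % k = 0 then 1 else 0) = 1 := by
      have : ∀ t ∈ Finset.range k, (if (0 + t) % k = 0 then 1 else 0)
          = if t = 0 then 1 else 0 := by
        intro t ht
        rw [Finset.mem_range] at ht
        rw [Nat.zero_add, Nat.mod_eq_of_lt ht]
      rw [Finset.sum_congr rfl this, Finset.sum_ite_eq' (Finset.range k) 0 (fun _ => 1)]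
      simp [hk0]
    have hT : (∑ t ∈ Finset.range k, if (0 + t) % h ≤ ρ then 1 else 0)
        = 2 * (ρ + 1) := by
      have hsplit : k = h + h := hkh
      rw [hsplit, Finset.sum_range_add]
      have h1 : (∑ t ∈ Finset.range h, if (0 + t) % h ≤ ρ then 1 else 0) = ρ + 1 :=
        count_eq h ρ 0 hρh
      have h2 : (∑ t ∈ Finset.range h, if (0 + (h + t)) % h ≤ ρ then 1 else 0)
          = ρ + 1 := by
        have : ∀ t ∈ Finset.range h, (if (0 + (h + t)) % h ≤ ρ then 1 else 0)
            = if (h + t) % h ≤ ρ then 1 else 0 := by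
          intro t _; rw [Nat.zero_add]
        rw [Finset.sum_congr rfl this]
        exact count_eq h ρ h hρh
      omega
    have hkey := key 0 k
    rw [hZ, hT] at hkey
    have hS : (∑ t ∈ Finset.range k, a ((0 + t) % k)) = ∑ i ∈ Finset.range k, a i := by
      apply Finset.sum_congr rfl
      intro t ht
      rw [Finset.mem_range] at ht
      rw [Nat.zero_add, Nat.mod_eq_of_lt ht]
    rw [hS] at hkey
    omega
  refine ⟨htot, ?_⟩
  -- rotated full-cycle sums
  have hfull : ∀ s, (∑ t ∈ Finset.range k, a ((s + t) % k)) = 2 * n := by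
    intro s
    rw [rot_sum a k s]
    have hS : (∑ t ∈ Finset.range k, a (t % k)) = ∑ i ∈ Finset.range k, a i := by
      apply Finset.sum_congr rfl
      intro t ht
      rw [Finset.mem_range] at ht
      rw [Nat.mod_eq_of_lt ht]
    rw [hS, htot]
  -- small windows (len < h) never sum to n
  have hsmall : ∀ s len, len < h → (∑ t ∈ Finset.range len, a ((s + t) % k)) ≠ n := by
    intro s len hlen heq
    have hkey := key s len
    have hT := count_le h ρ s len (by omega)
    have hZ := zcount_le k s len (by omega)
    have hmul : (len + 1) * q ≤ h * q := Nat.mul_le_mul_right q (by omega)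
    rw [add_mul, one_mul] at hmul
    omega
  intro s len hlen0 hlenk heq
  rcases lt_trichotomy len h with hc | hc | hc
  · exact hsmall s len hc heq
  · -- len = h
    subst hc
    have hkey := key s len
    have hT : (∑ t ∈ Finset.range len, if (s + t) % len ≤ ρ then 1 else 0) = ρ + 1 :=
      count_eq len ρ s hρh
    have hZ := zcount_le k s len (by omega)
    rw [hT] at hkey
    omega
  · -- len > h : use complement window of length k - len < h
    have hk' : len + (k - len) = k := by omega
    have hsplit := Finset.sum_range_add (fun t => a ((s + t) % k)) len (k - len)
    rw [hk'] at hsplit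
    have hfs := hfull s
    rw [hsplit] at hfs
    have hcomp : (∑ t ∈ Finset.range (k - len), a ((s + (len + t)) % k)) = n := by
      omega
    have : ∀ t ∈ Finset.range (k - len), a ((s + (len + t)) % k)
        = a ((s + len + t) % k) := by
      intro t _
      congr 2
      omega
    rw [Finset.sum_congr rfl this] at hcomp
    exact hsmall (s + len) (k - len) (by omega) hcomp
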